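/- If I is a weakly annihilated ideal of a commutative ring R and r ∈ R \ I, then the ideal quotient (I : r) = {a ∈ R : ar ∈ I} is also a weakly annihilated ideal. -/
import Mathlib

/-- An ideal `I` of a commutative ring is weakly annihilated if for each `a ∈ I` and
`b ∉ I` there exists `c` with `c * a = 0` but `c * b ≠ 0`. -/
def WeaklyAnnihilated {R : Type*} [CommRing R] (I : Ideal R) : Prop :=
  ∀ a ∈ I, ∀ b ∉ I, ∃ c : R, c * a = 0 ∧ c * b ≠ 0

theorem stmt0 {R : Type*} [CommRing R] (I : Ideal R) (r : R)
    (hI : WeaklyAnnihilated I) (hr : r ∉ I) :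
    WeaklyAnnihilated (I.colon (Ideal.span {r})) := by
  intro a ha b hb
  rw [Ideal.mem_colon_span_singleton] at ha hb
  obtain ⟨c, hc0, hc1⟩ := hI (a * r) ha (b * r) hb
  refine ⟨c * r, ?_, ?_⟩
  · rw [mul_assoc, mul_comm r a]; exact hc0
  · rw [mul_assoc, mul_comm r b]; exact hc1
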